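/- Let V be an alphabet with 26 letters (identified with Fin 26) and let B = {[0,1,0,1], [2,3,2,3], [0,1,2,3], [2,3,0,1]} (encoding the words PIPI, CACA, PICA and CAPI). Let a(n) be the number of words of length n over V avoiding B. Then the identity (Σ_{n≥0} a(n) s^n) · (1 − 26s + 2s² − 52s³ + 4s⁴) = 1 + 2s² holds in ℤ[[s]]. -/

import Mathlib

/-- The set of bad words: `PIPI`, `CACA`, `PICA`, `CAPI`, encoded over `Fin 26`. -/
def badPC4 : Finset (List (Fin 26)) :=
  {[0, 1, 0, 1], [2, 3, 2, 3], [0, 1, 2, 3], [2, 3, 0, 1]}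

/-- The number of words of length `n` over a 26-letter alphabet avoiding
`PIPI`, `CACA`, `PICA` and `CAPI` as factors. -/
noncomputable def aPC4 (n : ℕ) : ℕ :=
  Nat.card {f : Fin n → Fin 26 // ∀ b ∈ badPC4, ¬ b <:+: List.ofFn f}

namespace PC4Aux

open Finset List

def GoodW (l : List (Fin 26)) : Prop := ∀ b ∈ badPC4, ¬ b <:+: l

instance : DecidablePred GoodW := fun l => by unfold GoodW; infer_instance

def H1 : Finset (List (Fin 26)) := {[1], [3]}
def H2 : Finset (List (Fin 26)) := {[0, 1], [2, 3]}
def H3 : Finset (List (Fin 26)) := {[1, 0, 1], [1, 2, 3], [3, 0, 1], [3, 2, 3]}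

def aCnt (n : ℕ) : ℕ :=
  (Finset.univ.filter fun f : Fin n → Fin 26 => GoodW (List.ofFn f)).card
def bCnt (n : ℕ) : ℕ :=
  (Finset.univ.filter fun f : Fin n → Fin 26 =>
    GoodW (List.ofFn f) ∧ (List.ofFn f).take 2 ∈ H2).card
def cCnt (n : ℕ) : ℕ :=
  (Finset.univ.filter fun f : Fin n → Fin 26 =>
    GoodW (List.ofFn f) ∧ (List.ofFn f).take 3 ∈ H3).card
def dCnt (n : ℕ) : ℕ :=
  (Finset.univ.filter fun f : Fin n → Fin 26 =>
    GoodW (List.ofFn f) ∧ (List.ofFn f).take 1 ∈ H1).card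

lemma bad_len : ∀ b ∈ badPC4, b.length = 4 := by decide

lemma good_cons (x : Fin 26) (w : List (Fin 26)) :
    GoodW (x :: w) ↔ GoodW w ∧ (x :: w).take 4 ∉ badPC4 := by
  constructor
  · intro h
    refine ⟨fun b hb hin => h b hb (List.infix_cons hin), fun hmem => ?_⟩
    exact h _ hmem (List.take_prefix 4 _).isInfix
  · rintro ⟨hw, h4⟩ b hb hin
    rcases List.infix_cons_iff.mp hin with hp | hi
    · apply h4
      have hb4 : b.length = 4 := bad_len b hb
      have hbe := List.prefix_iff_eq_take.mp hp
      rw [hb4] at hbe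
      rw [← hbe]; exact hb
    · exact hw b hb hi

lemma mem_bad_cons {x : Fin 26} {t : List (Fin 26)} :
    x :: t ∈ badPC4 ↔
      (x = 0 ∧ t = [1, 0, 1]) ∨ (x = 2 ∧ t = [3, 2, 3]) ∨
      (x = 0 ∧ t = [1, 2, 3]) ∨ (x = 2 ∧ t = [3, 0, 1]) := by
  simp [badPC4]

/-- Generic cons-counting lemma. -/
lemma count_cons {n : ℕ} (s : Finset (Fin 26)) (P Q : List (Fin 26) → Prop)
    [DecidablePred P] [DecidablePred Q]
    (hQ : ∀ (x : Fin 26) (w : List (Fin 26)), Q (x :: w) ↔ x ∈ s ∧ P w) :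
    (Finset.univ.filter fun g : Fin (n + 1) → Fin 26 => Q (List.ofFn g)).card
      = s.card * (Finset.univ.filter fun f : Fin n → Fin 26 => P (List.ofFn f)).card := by
  rw [← Finset.card_product]
  apply Finset.card_nbij' (fun g => (g 0, fun i => g i.succ))
    (fun p => Fin.cons p.1 p.2)
  · intro g hg
    simp only [Finset.mem_coe, Finset.mem_filter, Finset.mem_univ, true_and] at hg
    rw [List.ofFn_succ, hQ] at hg
    simp only [Finset.mem_coe, Finset.mem_product, Finset.mem_filter, Finset.mem_univ, true_and]
    exact hg
  · intro p hp
    simp only [Finset.mem_coe, Finset.mem_product, Finset.mem_filter, Finset.mem_univ, true_and] at hp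
    simp only [Finset.mem_coe, Finset.mem_filter, Finset.mem_univ, true_and]
    rw [List.ofFn_succ, Fin.cons_zero]
    simp only [Fin.cons_succ]
    exact (hQ _ _).mpr hp
  · intro g _
    funext i
    cases i using Fin.cases <;> simp
  · intro p _
    ext <;> simp

lemma R4 (n : ℕ) : dCnt (n + 1) = 2 * aCnt n := by
  have h := count_cons (n := n) ({1, 3} : Finset (Fin 26)) GoodW
      (fun l => GoodW l ∧ l.take 1 ∈ H1) ?_
  · rw [dCnt, aCnt, h, show ({1, 3} : Finset (Fin 26)).card = 2 from by decide]
  intro x w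
  have htake : (x :: w).take 1 = [x] := rfl
  constructor
  · rintro ⟨hg, h1⟩
    rw [htake] at h1
    have hx : x = 1 ∨ x = 3 := by
      revert h1; simp [H1]
    refine ⟨by simp [hx], ((good_cons x w).mp hg).1⟩
  · rintro ⟨hx, hw⟩
    have hx' : x = 1 ∨ x = 3 := by revert hx; simp
    refine ⟨(good_cons x w).mpr ⟨hw, ?_⟩, by rw [htake]; rcases hx' with h | h <;> simp [h, H1]⟩
    intro hmem
    rw [show (x :: w).take 4 = x :: w.take 3 from rfl, mem_bad_cons] at hmem
    rcases hmem with ⟨h, -⟩ | ⟨h, -⟩ | ⟨h, -⟩ | ⟨h, -⟩ <;>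
      rcases hx' with rfl | rfl <;> exact absurd h (by decide)

lemma R2 (n : ℕ) : cCnt (n + 1) = 2 * bCnt n := by
  have h := count_cons (n := n) ({1, 3} : Finset (Fin 26))
      (fun l => GoodW l ∧ l.take 2 ∈ H2) (fun l => GoodW l ∧ l.take 3 ∈ H3) ?_
  · rw [cCnt, bCnt, h, show ({1, 3} : Finset (Fin 26)).card = 2 from by decide]
  intro x w
  have htake : (x :: w).take 3 = x :: w.take 2 := rfl
  have hH3 : (x :: w.take 2 ∈ H3) ↔ ((x = 1 ∨ x = 3) ∧ w.take 2 ∈ H2) := by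
    simp only [H3, H2, Finset.mem_insert, Finset.mem_singleton, List.cons.injEq]
    tauto
  constructor
  · rintro ⟨hg, h3⟩
    rw [htake, hH3] at h3
    exact ⟨by simp [h3.1], ((good_cons x w).mp hg).1, h3.2⟩
  · rintro ⟨hx, hw, h2⟩
    have hx' : x = 1 ∨ x = 3 := by revert hx; simp
    refine ⟨(good_cons x w).mpr ⟨hw, ?_⟩, by rw [htake, hH3]; exact ⟨hx', h2⟩⟩
    intro hmem
    rw [show (x :: w).take 4 = x :: w.take 3 from rfl, mem_bad_cons] at hmem
    rcases hmem with ⟨h, -⟩ | ⟨h, -⟩ | ⟨h, -⟩ | ⟨h, -⟩ <;>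
      rcases hx' with rfl | rfl <;> exact absurd h (by decide)

def pick (t : List (Fin 26)) : Fin 26 := if t = [1] then 0 else 2

lemma pick_spec {l : List (Fin 26)} (h : l.take 3 ∈ H3) :
    (pick (l.take 1) :: l.take 3 ∈ badPC4) ∧ l.take 1 ∈ H1 := by
  have h1 : l.take 1 = (l.take 3).take 1 := by
    rw [List.take_take]; norm_num
  rw [H3, Finset.mem_insert, Finset.mem_insert, Finset.mem_insert,
    Finset.mem_singleton] at h
  rcases h with h3 | h3 | h3 | h3 <;> rw [h1, h3] <;> decide

lemma bad_tail {x : Fin 26} {t : List (Fin 26)} (h : x :: t ∈ badPC4) :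
    t ∈ H3 ∧ x = pick (t.take 1) := by
  rw [mem_bad_cons] at h
  rcases h with ⟨rfl, rfl⟩ | ⟨rfl, rfl⟩ | ⟨rfl, rfl⟩ | ⟨rfl, rfl⟩ <;>
    exact ⟨by decide, by decide⟩

lemma R1 (n : ℕ) : aCnt (n + 1) + cCnt n = 26 * aCnt n := by
  classical
  set T := Finset.univ.filter
    (fun g : Fin (n + 1) → Fin 26 => GoodW ((List.ofFn g).tail)) with hTdef
  have hT : T.card = 26 * aCnt n := by
    rw [hTdef, aCnt]
    have h := count_cons (n := n) (Finset.univ : Finset (Fin 26)) GoodW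
        (fun l => GoodW l.tail) (by intro x w; simp)
    rw [h, Finset.card_univ, Fintype.card_fin]
  have split := Finset.card_filter_add_card_filter_not (s := T)
    (p := fun g => GoodW (List.ofFn g))
  have e1 : T.filter (fun g => GoodW (List.ofFn g))
      = Finset.univ.filter (fun g : Fin (n + 1) → Fin 26 => GoodW (List.ofFn g)) := by
    ext g
    simp only [hTdef, Finset.mem_coe, Finset.mem_filter, Finset.mem_univ, true_and]
    constructor
    · rintro ⟨-, h⟩; exact h
    · intro h
      refine ⟨?_, h⟩
      rw [List.ofFn_succ] at h ⊢
      rw [List.tail_cons]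
      exact ((good_cons _ _).mp h).1
  have e2 : (T.filter (fun g => ¬ GoodW (List.ofFn g))).card = cCnt n := by
    rw [cCnt]
    apply Finset.card_nbij' (fun g => fun i => g i.succ)
      (fun f => Fin.cons (pick ((List.ofFn f).take 1)) f)
    · intro g hg
      simp only [hTdef, Finset.mem_coe, Finset.mem_filter, Finset.mem_univ, true_and] at hg ⊢
      obtain ⟨ht, hng⟩ := hg
      rw [List.ofFn_succ, List.tail_cons] at ht
      rw [List.ofFn_succ, good_cons] at hng
      have hbad : ((g 0) :: (List.ofFn fun i => g i.succ)).take 4 ∈ badPC4 := by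
        by_contra hc; exact hng ⟨ht, hc⟩
      exact ⟨ht, (bad_tail hbad).1⟩
    · intro f hf
      simp only [Finset.mem_coe, Finset.mem_filter, Finset.mem_univ, true_and] at hf
      obtain ⟨hg, h3⟩ := hf
      obtain ⟨hbad, -⟩ := pick_spec h3
      simp only [hTdef, Finset.mem_coe, Finset.mem_filter, Finset.mem_univ, true_and]
      constructor
      · rw [List.ofFn_succ]
        simp only [Fin.cons_succ, Fin.cons_zero, List.tail_cons]
        exact hg
      · rw [List.ofFn_succ]
        simp only [Fin.cons_succ, Fin.cons_zero]
        rw [good_cons]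
        rintro ⟨-, hc⟩
        exact hc hbad
    · intro g hg
      simp only [hTdef, Finset.mem_coe, Finset.mem_filter, Finset.mem_univ, true_and] at hg
      obtain ⟨ht, hng⟩ := hg
      rw [List.ofFn_succ, List.tail_cons] at ht
      rw [List.ofFn_succ, good_cons] at hng
      have hbad : ((g 0) :: (List.ofFn fun i => g i.succ)).take 4 ∈ badPC4 := by
        by_contra hc; exact hng ⟨ht, hc⟩
      have hx := (bad_tail hbad).2
      funext i
      cases i using Fin.cases
      · beta_reduce; rw [Fin.cons_zero]
        rw [show ((List.ofFn fun i => g i.succ).take 3).take 1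
            = (List.ofFn fun i => g i.succ).take 1 from by rw [List.take_take]; norm_num] at hx
        exact hx.symm
      · beta_reduce; rw [Fin.cons_succ]
    · intro f _
      funext i
      beta_reduce; rw [Fin.cons_succ]
  rw [e1] at split
  rw [e2] at split
  rw [hT] at split
  rw [aCnt]
  exact split

lemma mem_H2_cons {x : Fin 26} {t : List (Fin 26)} :
    x :: t ∈ H2 ↔ (x = 0 ∧ t = [1]) ∨ (x = 2 ∧ t = [3]) := by
  simp [H2]

lemma R3 (n : ℕ) : bCnt (n + 1) + cCnt n = dCnt n := by
  classical
  set Dset := Finset.univ.filter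
    (fun f : Fin n → Fin 26 => GoodW (List.ofFn f) ∧ (List.ofFn f).take 1 ∈ H1)
    with hDdef
  have split := Finset.card_filter_add_card_filter_not (s := Dset)
    (p := fun f => (List.ofFn f).take 3 ∈ H3)
  have e1 : (Dset.filter (fun f => (List.ofFn f).take 3 ∈ H3)).card = cCnt n := by
    rw [cCnt]
    congr 1
    ext f
    simp only [hDdef, Finset.mem_coe, Finset.mem_filter, Finset.mem_univ, true_and]
    constructor
    · rintro ⟨⟨hg, -⟩, h3⟩; exact ⟨hg, h3⟩
    · rintro ⟨hg, h3⟩; exact ⟨⟨hg, (pick_spec h3).2⟩, h3⟩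
  have e2 : bCnt (n + 1) = (Dset.filter (fun f => ¬ ((List.ofFn f).take 3 ∈ H3))).card := by
    rw [bCnt]
    apply Finset.card_nbij' (fun g => fun i => g i.succ)
      (fun f => Fin.cons (pick ((List.ofFn f).take 1)) f)
    · intro g hg
      simp only [Finset.mem_coe, Finset.mem_filter, Finset.mem_univ, true_and] at hg
      obtain ⟨hgood, h2⟩ := hg
      rw [List.ofFn_succ] at hgood h2
      rw [show ((g 0) :: (List.ofFn fun i => g i.succ)).take 2
          = (g 0) :: (List.ofFn fun i => g i.succ).take 1 from rfl, mem_H2_cons] at h2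
      obtain ⟨hw, h4⟩ := (good_cons _ _).mp hgood
      simp only [hDdef, Finset.mem_coe, Finset.mem_filter, Finset.mem_univ, true_and]
      refine ⟨⟨hw, ?_⟩, ?_⟩
      · rcases h2 with ⟨-, ht⟩ | ⟨-, ht⟩ <;> rw [ht] <;> decide
      · intro h3
        obtain ⟨hbad, -⟩ := pick_spec h3
        apply h4
        have hpick : pick ((List.ofFn fun i => g i.succ).take 1) = g 0 := by
          rcases h2 with ⟨hx, ht⟩ | ⟨hx, ht⟩ <;> rw [ht, hx] <;> decide
        rw [hpick] at hbad
        exact hbad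
    · intro f hf
      simp only [hDdef, Finset.mem_coe, Finset.mem_filter, Finset.mem_univ, true_and] at hf
      obtain ⟨⟨hg, h1⟩, h3⟩ := hf
      have h1' : (List.ofFn f).take 1 = [1] ∨ (List.ofFn f).take 1 = [3] := by
        revert h1; simp [H1]
      simp only [Finset.mem_coe, Finset.mem_filter, Finset.mem_univ, true_and]
      rw [List.ofFn_succ]
      simp only [Fin.cons_succ, Fin.cons_zero]
      constructor
      · rw [good_cons]
        refine ⟨hg, ?_⟩
        intro hmem
        rw [show (pick ((List.ofFn f).take 1) :: List.ofFn f).take 4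
            = pick ((List.ofFn f).take 1) :: (List.ofFn f).take 3 from rfl] at hmem
        exact h3 (bad_tail hmem).1
      · rw [show (pick ((List.ofFn f).take 1) :: List.ofFn f).take 2
            = pick ((List.ofFn f).take 1) :: (List.ofFn f).take 1 from rfl, mem_H2_cons]
        rcases h1' with ht | ht <;> rw [ht] <;> [left; right] <;> exact ⟨by decide, rfl⟩
    · intro g hg
      simp only [Finset.mem_coe, Finset.mem_filter, Finset.mem_univ, true_and] at hg
      obtain ⟨hgood, h2⟩ := hg
      rw [List.ofFn_succ] at h2
      rw [show ((g 0) :: (List.ofFn fun i => g i.succ)).take 2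
          = (g 0) :: (List.ofFn fun i => g i.succ).take 1 from rfl, mem_H2_cons] at h2
      funext i
      cases i using Fin.cases
      · beta_reduce; rw [Fin.cons_zero]
        rcases h2 with ⟨hx, ht⟩ | ⟨hx, ht⟩ <;> rw [ht, hx] <;> decide
      · beta_reduce; rw [Fin.cons_succ]
    · intro f _
      funext i
      beta_reduce; rw [Fin.cons_succ]
  rw [e1] at split
  rw [e2, hDdef]
  rw [hDdef] at split
  rw [dCnt]
  omega

lemma main_rec (n : ℕ) :
    aCnt (n + 4) + 2 * aCnt (n + 2) + 4 * aCnt n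
      = 26 * aCnt (n + 3) + 52 * aCnt (n + 1) := by
  have h1 : aCnt (n + 4) + cCnt (n + 3) = 26 * aCnt (n + 3) := R1 (n + 3)
  have h2 : cCnt (n + 3) = 2 * bCnt (n + 2) := R2 (n + 2)
  have h3 : bCnt (n + 2) + cCnt (n + 1) = dCnt (n + 1) := R3 (n + 1)
  have h4 : dCnt (n + 1) = 2 * aCnt n := R4 n
  have h5 : aCnt (n + 2) + cCnt (n + 1) = 26 * aCnt (n + 1) := R1 (n + 1)
  omega

lemma aPC4_eq (n : ℕ) : aPC4 n = aCnt n := by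
  rw [aPC4, Nat.card_eq_fintype_card, Fintype.card_subtype, aCnt]
  congr 1

lemma good_short {l : List (Fin 26)} (h : l.length ≤ 3) : GoodW l := by
  intro b hb hin
  have h1 := hin.length_le
  have hb4 := bad_len b hb
  omega

lemma aCnt_small (n : ℕ) (h : n ≤ 3) : aCnt n = 26 ^ n := by
  rw [aCnt, Finset.filter_true_of_mem, Finset.card_univ]
  · rw [Fintype.card_fun, Fintype.card_fin, Fintype.card_fin]
  · intro f _
    exact good_short (by simpa using h)

end PC4Aux

/-- `f(s)·(1 - 26s + 2s² - 52s³ + 4s⁴) = 1 + 2s²` for the generating function of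
words avoiding `PIPI`, `CACA`, `PICA` and `CAPI`. -/
theorem stmt10 :
    PowerSeries.mk (fun n => (aPC4 n : ℤ)) *
        (1 - 26 * PowerSeries.X + 2 * PowerSeries.X ^ 2 - 52 * PowerSeries.X ^ 3 +
          4 * PowerSeries.X ^ 4) =
      1 + 2 * PowerSeries.X ^ 2 := by
  classical
  have key : ∀ n, aPC4 (n + 4) + 2 * aPC4 (n + 2) + 4 * aPC4 n
      = 26 * aPC4 (n + 3) + 52 * aPC4 (n + 1) := by
    intro n
    simp only [PC4Aux.aPC4_eq]
    exact PC4Aux.main_rec n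
  have h0 : aPC4 0 = 1 := by rw [PC4Aux.aPC4_eq, PC4Aux.aCnt_small 0 (by norm_num)]; norm_num
  have h1 : aPC4 1 = 26 := by rw [PC4Aux.aPC4_eq, PC4Aux.aCnt_small 1 (by norm_num)]; norm_num
  have h2 : aPC4 2 = 676 := by rw [PC4Aux.aPC4_eq, PC4Aux.aCnt_small 2 (by norm_num)]; norm_num
  have h3 : aPC4 3 = 17576 := by rw [PC4Aux.aPC4_eq, PC4Aux.aCnt_small 3 (by norm_num)]; norm_num
  apply PowerSeries.ext
  intro n
  set f := PowerSeries.mk (fun n => (aPC4 n : ℤ)) with hf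
  have e26 : (26 : PowerSeries ℤ) = PowerSeries.C (R := ℤ) 26 := (map_ofNat _ _).symm
  have e2 : (2 : PowerSeries ℤ) = PowerSeries.C (R := ℤ) 2 := (map_ofNat _ _).symm
  have e52 : (52 : PowerSeries ℤ) = PowerSeries.C (R := ℤ) 52 := (map_ofNat _ _).symm
  have e4 : (4 : PowerSeries ℤ) = PowerSeries.C (R := ℤ) 4 := (map_ofNat _ _).symm
  have expand : f * (1 - 26 * PowerSeries.X + 2 * PowerSeries.X ^ 2
        - 52 * PowerSeries.X ^ 3 + 4 * PowerSeries.X ^ 4)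
      = f - PowerSeries.C (R := ℤ) 26 * (f * PowerSeries.X ^ 1)
        + PowerSeries.C (R := ℤ) 2 * (f * PowerSeries.X ^ 2)
        - PowerSeries.C (R := ℤ) 52 * (f * PowerSeries.X ^ 3)
        + PowerSeries.C (R := ℤ) 4 * (f * PowerSeries.X ^ 4) := by
    rw [e26, e2, e52, e4]; ring
  have expandR : (1 + 2 * PowerSeries.X ^ 2 : PowerSeries ℤ)
      = 1 + PowerSeries.C (R := ℤ) 2 * PowerSeries.X ^ 2 := by rw [e2]
  rw [expand, expandR]
  simp only [map_add, map_sub, PowerSeries.coeff_C_mul, PowerSeries.coeff_mul_X_pow',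
    PowerSeries.coeff_mk, PowerSeries.coeff_one, PowerSeries.coeff_X_pow,
    PowerSeries.coeff_C, hf]
  rcases n with _ | n
  · norm_num [h0]
  rcases n with _ | n
  · norm_num [h0, h1]
  rcases n with _ | n
  · norm_num [h0, h1, h2]
  rcases n with _ | n
  · norm_num [h0, h1, h2, h3]
  have hk := key n
  have eb : n + 1 + 1 + 1 + 1 - 1 = n + 3 := rfl
  have ec : n + 1 + 1 + 1 + 1 - 2 = n + 2 := rfl
  have ed : n + 1 + 1 + 1 + 1 - 3 = n + 1 := rfl
  have ee : n + 1 + 1 + 1 + 1 - 4 = n := rfl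
  have ea : n + 1 + 1 + 1 + 1 = n + 4 := rfl
  rw [eb, ec, ed, ee, ea]
  split_ifs <;> first | omega | exact False.elim (by assumption)
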